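/- arXiv:1809.00369 — 8 statements merged into one kernel-verified Lean document; each statement's English description precedes it below -/
import Mathlib

section
/- Let n, s be positive integers and write n − s(s+1)/2 = ⌊n/(s+1) − s/2⌋·(s+1) + e with 0 ≤ e ≤ s. Let ℘(s,n) = (p₁, …, p_{s+1}) be defined by p_j = ⌊(n − ∑_{1 ≤ i ≤ j−1} p_i)/(s+2−j) − (s+1−j)/2⌋ for 1 ≤ j ≤ s+1. Then p_j = p₁ + j − 1 for 1 ≤ j ≤ s+1−e and p_j = p₁ + j for s+2−e ≤ j ≤ s+1. In particular p₁ < p₂ < ⋯ < p_{s+1} and p₁ + ⋯ + p_{s+1} = n. -/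
/-- Partial sums `p₁ + ⋯ + p_j` of the tuple `℘(s,n)`, defined recursively:
`p_{j+1} = ⌊(n − (p₁ + ⋯ + p_j))/(s+1−j) − (s−j)/2⌋` (0-indexed `j`). -/
def wpSum (s n : ℕ) : ℕ → ℤ
  | 0 => 0
  | j + 1 => wpSum s n j +
      ⌊((n : ℚ) - wpSum s n j) / ((s : ℚ) + 1 - j) - ((s : ℚ) - j) / 2⌋

/-- The entry `p_{j+1}` of `℘(s,n)` (0-indexed). -/
def wp (s n : ℕ) (j : ℕ) : ℤ := wpSum s n (j + 1) - wpSum s n j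

theorem wp_entries (s n : ℕ) (hs : 1 ≤ s) (hn : 1 ≤ n) (e : ℕ) (he : e ≤ s)
    (heq : (n : ℤ) - (s * (s + 1)) / 2
      = ⌊(n : ℚ) / ((s : ℚ) + 1) - (s : ℚ) / 2⌋ * ((s : ℤ) + 1) + e) :
    (∀ j, j + e ≤ s → wp s n j = wp s n 0 + j) ∧
    (∀ j, s < j + e → j ≤ s → wp s n j = wp s n 0 + j + 1) ∧
    (∀ i j, i < j → j ≤ s → wp s n i < wp s n j) ∧
    (∑ j ∈ Finset.range (s + 1), wp s n j) = n := by
  set P : ℤ := ⌊(n : ℚ) / ((s : ℚ) + 1) - (s : ℚ) / 2⌋ with hP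
  -- turn heq into a rational identity
  obtain ⟨c, hc⟩ : (2 : ℤ) ∣ (s : ℤ) * ((s : ℤ) + 1) := by
    rcases Int.even_mul_succ_self (s : ℤ) with ⟨c, hc⟩
    exact ⟨c, by linarith⟩
  have hdiv : ((s : ℤ) * ((s : ℤ) + 1)) / 2 = c := by rw [hc]; exact Int.mul_ediv_cancel_left _ (by norm_num)
  have heqZ : (n : ℤ) = P * ((s : ℤ) + 1) + e + c := by
    have : ((s : ℕ) * ((s : ℕ) + 1) : ℤ) / 2 = c := by push_cast at hdiv ⊢; exact hdiv
    omega
  have hn2 : (n : ℚ) = (s : ℚ) * ((s : ℚ) + 1) / 2 + (P : ℚ) * ((s : ℚ) + 1) + e := by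
    have h1 : (n : ℚ) = (P : ℚ) * ((s : ℚ) + 1) + e + c := by exact_mod_cast heqZ
    have h2 : (s : ℚ) * ((s : ℚ) + 1) = 2 * c := by exact_mod_cast hc
    linarith
  -- closed form of wpSum
  have key : ∀ j, j ≤ s + 1 → (wpSum s n j : ℚ)
      = j * P + j * (j - 1) / 2 + max 0 ((j : ℚ) + e - (s + 1)) := by
    intro j
    induction j with
    | zero =>
      intro _
      have heQ : (e : ℚ) ≤ (s : ℚ) := by exact_mod_cast he
      have h0 : (wpSum s n 0 : ℚ) = 0 := by simp [wpSum]
      rw [h0, max_eq_left (by push_cast; linarith)]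
      push_cast; ring
    | succ j ih =>
      intro hj
      have hjs : j ≤ s := by omega
      have IH := ih (by omega)
      have hjsQ : (j : ℚ) ≤ (s : ℚ) := by exact_mod_cast hjs
      have hk : (0 : ℚ) < (s : ℚ) + 1 - j := by linarith
      have heQ : (e : ℚ) ≤ (s : ℚ) := by exact_mod_cast he
      show ((wpSum s n j + ⌊((n : ℚ) - wpSum s n j) / ((s : ℚ) + 1 - j) - ((s : ℚ) - j) / 2⌋ : ℤ) : ℚ) = _
      by_cases h1 : j + e ≤ s
      · have h1Q : (j : ℚ) + e ≤ s := by exact_mod_cast h1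
        have hM : max (0 : ℚ) ((j : ℚ) + e - (s + 1)) = 0 := max_eq_left (by linarith)
        have hM' : max (0 : ℚ) ((j + 1 : ℕ) + e - ((s : ℚ) + 1)) = 0 := by
          apply max_eq_left; push_cast; linarith
        have harg : ((n : ℚ) - wpSum s n j) / ((s : ℚ) + 1 - j) - ((s : ℚ) - j) / 2
            = ((P + j : ℤ) : ℚ) + (e : ℚ) / ((s : ℚ) + 1 - j) := by
          rw [IH, hM, hn2]
          field_simp
          push_cast
          ring
        have hfl : ⌊((n : ℚ) - wpSum s n j) / ((s : ℚ) + 1 - j) - ((s : ℚ) - j) / 2⌋ = P + j := by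
          rw [harg, Int.floor_intCast_add]
          have : ⌊(e : ℚ) / ((s : ℚ) + 1 - j)⌋ = 0 := by
            apply Int.floor_eq_zero_iff.2
            constructor
            · positivity
            · rw [div_lt_one hk]; linarith
          omega
        rw [hfl]; rw [hM']
        push_cast
        rw [IH, hM]
        ring
      · have h1Q : (s : ℚ) + 1 ≤ (j : ℚ) + e := by
          have : s + 1 ≤ j + e := by omega
          exact_mod_cast this
        have hM : max (0 : ℚ) ((j : ℚ) + e - (s + 1)) = (j : ℚ) + e - (s + 1) :=
          max_eq_right (by linarith)
        have hM' : max (0 : ℚ) (((j + 1 : ℕ) : ℚ) + e - ((s : ℚ) + 1))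
            = ((j + 1 : ℕ) : ℚ) + e - ((s : ℚ) + 1) := by
          apply max_eq_right; push_cast; linarith
        have harg : ((n : ℚ) - wpSum s n j) / ((s : ℚ) + 1 - j) - ((s : ℚ) - j) / 2
            = ((P + j + 1 : ℤ) : ℚ) := by
          rw [IH, hM, hn2]
          field_simp
          push_cast
          ring
        have hfl : ⌊((n : ℚ) - wpSum s n j) / ((s : ℚ) + 1 - j) - ((s : ℚ) - j) / 2⌋ = P + j + 1 := by
          rw [harg, Int.floor_intCast]
        rw [hfl, hM']
        push_cast
        rw [IH, hM]
        ring
  -- entry values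
  have hwpQ : ∀ j, j ≤ s → (wp s n j : ℚ) = P + j + (if j + e ≤ s then 0 else 1) := by
    intro j hj
    have h1 := key j (by omega)
    have h2 := key (j + 1) (by omega)
    have heQ : (e : ℚ) ≤ (s : ℚ) := by exact_mod_cast he
    have hjsQ : (j : ℚ) ≤ (s : ℚ) := by exact_mod_cast hj
    unfold wp
    push_cast
    rw [h2, h1]
    by_cases h : j + e ≤ s
    · have hQ : (j : ℚ) + e ≤ s := by exact_mod_cast h
      rw [if_pos h]
      have hM : max (0 : ℚ) ((j : ℚ) + e - (s + 1)) = 0 := max_eq_left (by linarith)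
      have hM' : max (0 : ℚ) (((j : ℚ) + 1) + e - ((s : ℚ) + 1)) = 0 := max_eq_left (by linarith)
      push_cast
      rw [hM, hM']
      ring
    · have hQ : (s : ℚ) + 1 ≤ (j : ℚ) + e := by
        have : s + 1 ≤ j + e := by omega
        exact_mod_cast this
      rw [if_neg h]
      have hM : max (0 : ℚ) ((j : ℚ) + e - (s + 1)) = (j : ℚ) + e - (s + 1) :=
        max_eq_right (by linarith)
      have hM' : max (0 : ℚ) (((j : ℚ) + 1) + e - ((s : ℚ) + 1)) = ((j : ℚ) + 1) + e - ((s : ℚ) + 1) :=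
        max_eq_right (by linarith)
      push_cast
      rw [hM, hM']
      ring
  have hwp0 : (wp s n 0 : ℚ) = P := by
    have := hwpQ 0 (by omega)
    rw [if_pos (by omega)] at this
    simpa using this
  have hwp : ∀ j, j ≤ s → wp s n j = P + j + (if j + e ≤ s then 0 else 1) := by
    intro j hj
    have h := hwpQ j hj
    by_cases hc2 : j + e ≤ s
    · rw [if_pos hc2] at h ⊢; exact_mod_cast h
    · rw [if_neg hc2] at h ⊢; exact_mod_cast h
  have hwp0Z : wp s n 0 = P := by
    have := hwp 0 (by omega); rw [if_pos (by omega)] at this; simpa using this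
  refine ⟨?_, ?_, ?_, ?_⟩
  · intro j hj
    rw [hwp j (by omega), if_pos hj, hwp0Z]; ring
  · intro j hj1 hj2
    rw [hwp j hj2, if_neg (by omega), hwp0Z]
  · intro i j hij hj
    have hi := hwp i (by omega)
    have hjv := hwp j hj
    split at hi <;> split at hjv <;> omega
  · have htel : ∑ j ∈ Finset.range (s + 1), wp s n j = wpSum s n (s + 1) - wpSum s n 0 := by
      simp only [wp]
      exact Finset.sum_range_sub (wpSum s n) (s + 1)
    have hv := key (s + 1) (le_refl _)
    have hM : max (0 : ℚ) (((s + 1 : ℕ) : ℚ) + e - ((s : ℚ) + 1)) = e := by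
      have hx : ((s + 1 : ℕ) : ℚ) + e - ((s : ℚ) + 1) = e := by push_cast; ring
      rw [hx]; exact max_eq_right (by positivity)
    rw [hM] at hv
    have : (wpSum s n (s + 1) : ℚ) = (n : ℚ) := by
      rw [hv, hn2]; push_cast; ring
    have hfin : wpSum s n (s + 1) = n := by exact_mod_cast this
    rw [htel, hfin]
    simp [wpSum]
end

section
/- Let n, s be positive integers with (s+1)(s+2) ≤ 2n, and let ℘(s,n) = (p₁, …, p_{s+1}) be as defined. Then p₁ ≥ 1, i.e., all entries of ℘(s,n) are positive integers. -/
lemma wp_invariant (s n : ℕ) (h : (s + 1) * (s + 2) ≤ 2 * n) :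
    ∀ j ≤ s, ((s : ℚ) + 1 - j) * ((s : ℚ) + 2 - j) ≤ 2 * ((n : ℚ) - wpSum s n j) := by
  intro j
  induction j with
  | zero =>
      intro _
      simp only [wpSum, Nat.cast_zero, Int.cast_zero, sub_zero]
      have := h
      push_cast
      have : ((s : ℚ) + 1) * ((s : ℚ) + 2) ≤ 2 * n := by exact_mod_cast h
      linarith
  | succ j ih =>
      intro hj
      have hjs : j ≤ s := Nat.le_of_succ_le hj
      have hjlt : j < s := hj
      have inv := ih hjs
      set m : ℚ := (s : ℚ) - j with hm
      have hm1 : 1 ≤ m := by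
        have : (j : ℚ) + 1 ≤ s := by exact_mod_cast hjlt
        simp [hm]; linarith
      have hd : (0 : ℚ) < m + 1 := by linarith
      set x : ℚ := (n : ℚ) - wpSum s n j with hx
      have hfl : (⌊x / (m + 1) - m / 2⌋ : ℚ) ≤ x / (m + 1) - m / 2 := Int.floor_le _
      have hp' : ((⌊x / (m + 1) - m / 2⌋ : ℚ) + m / 2) * (m + 1) ≤ x := by
        rw [← le_div_iff₀ hd]; linarith
      have hS : wpSum s n (j + 1) = wpSum s n j + ⌊x / (m + 1) - m / 2⌋ := by
        show wpSum s n j + _ = _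
        congr 2
        rw [hx, hm]; ring_nf
      rw [hS]
      push_cast
      have hgoal : ((s : ℚ) + 1 - (j + 1)) = m ∧ ((s : ℚ) + 2 - (j + 1)) = m + 1 := by
        constructor <;> (rw [hm]; ring)
      rw [show ((s : ℚ) + 1 - (↑j + 1)) = m by rw [hm]; ring,
          show ((s : ℚ) + 2 - (↑j + 1)) = m + 1 by rw [hm]; ring]
      have hinv : (m + 1) * (m + 2) ≤ 2 * x := by
        have h1 : ((s : ℚ) + 1 - j) = m + 1 := by rw [hm]; ring
        have h2 : ((s : ℚ) + 2 - j) = m + 2 := by rw [hm]; ring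
        rw [h1, h2] at inv; exact inv
      nlinarith [hp', hinv, hm1, mul_pos hd hd]

theorem wp_entries_pos (s n : ℕ) (hs : 1 ≤ s) (hn : 1 ≤ n)
    (h : (s + 1) * (s + 2) ≤ 2 * n) :
    ∀ j ≤ s, 1 ≤ wp s n j := by
  intro j hj
  have inv := wp_invariant s n h j hj
  set m : ℚ := (s : ℚ) - j with hm
  have hm0 : 0 ≤ m := by
    have : (j : ℚ) ≤ s := by exact_mod_cast hj
    simp [hm]; linarith
  have hd : (0 : ℚ) < m + 1 := by linarith
  have hinv : (m + 1) * (m + 2) ≤ 2 * ((n : ℚ) - wpSum s n j) := by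
    have h1 : ((s : ℚ) + 1 - j) = m + 1 := by rw [hm]; ring
    have h2 : ((s : ℚ) + 2 - j) = m + 2 := by rw [hm]; ring
    rw [h1, h2] at inv; exact inv
  have hwp : wp s n j = ⌊((n : ℚ) - wpSum s n j) / (m + 1) - m / 2⌋ := by
    show wpSum s n (j+1) - wpSum s n j = _
    show wpSum s n j + _ - wpSum s n j = _
    rw [add_sub_cancel_left]
    congr 2
    rw [hm]; ring_nf
  rw [hwp]
  rw [Int.le_floor]
  push_cast
  rw [le_sub_iff_add_le, le_div_iff₀ hd]
  nlinarith
end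

section
/- Let ℑ(s,n) denote the set of α = (a₁, …, a_{s+1}) ∈ Z^{s+1} with a₁ < a₂ < ⋯ < a_{s+1} and ∑ aᵢ = n. If v = (v₁, …, v_{s+1}) ∈ ℑ(s,n) is such that no element of ℑ(s,n) is an elementary modification of v (i.e. v + η(i,j) ∉ ℑ(s,n) for all 1 ≤ i < j ≤ s+1), then vᵢ + 1 ≤ v_{i+1} ≤ vᵢ + 2 for all 1 ≤ i ≤ s, and v_{i+1} = vᵢ + 2 for at most one index i. -/
theorem final_tuple_structure (s n : ℕ) (hs : 1 ≤ s) (hn : 1 ≤ n)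
    (v : Fin (s + 1) → ℤ) (hv : StrictMono v) (hsum : ∑ i, v i = n)
    (hfinal : ∀ i j : Fin (s + 1), i < j →
      ¬ (StrictMono (fun k => v k + (if k = i then 1 else 0) - (if k = j then 1 else 0)) ∧
        (∑ k, (v k + (if k = i then 1 else 0) - (if k = j then 1 else 0))) = n)) :
    (∀ i : Fin s, v i.castSucc + 1 ≤ v i.succ ∧ v i.succ ≤ v i.castSucc + 2) ∧
    (∀ i₁ i₂ : Fin s, v i₁.succ = v i₁.castSucc + 2 → v i₂.succ = v i₂.castSucc + 2 →
      i₁ = i₂) := by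
  have hsum' : ∀ i j : Fin (s + 1), i ≠ j →
      (∑ k, (v k + (if k = i then (1:ℤ) else 0) - (if k = j then 1 else 0))) = n := by
    intro i j hij
    have h : (∑ k, (v k + (if k = i then (1:ℤ) else 0) - (if k = j then 1 else 0)))
        = (∑ k, v k) + (∑ k, if k = i then (1:ℤ) else 0)
          - (∑ k, if k = j then (1:ℤ) else 0) := by
      rw [Finset.sum_sub_distrib, Finset.sum_add_distrib]
    rw [h, hsum]
    simp
  constructor
  · intro i
    refine ⟨hv (Fin.castSucc_lt_succ (i := i)), ?_⟩
    by_contra hgap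
    push_neg at hgap
    have hgap3 : v i.castSucc + 3 ≤ v i.succ := by omega
    apply hfinal i.castSucc i.succ (Fin.castSucc_lt_succ (i := i))
    refine ⟨?_, hsum' _ _ (Fin.castSucc_lt_succ (i := i)).ne⟩
    rw [Fin.strictMono_iff_lt_succ]
    intro k

    have hk1 : v k.castSucc < v k.succ := hv (Fin.castSucc_lt_succ (i := k))
    rcases eq_or_ne k i with rfl | hki
    · rw [if_pos rfl, if_neg (Fin.castSucc_lt_succ (i := k)).ne,
        if_neg (Fin.castSucc_lt_succ (i := k)).ne', if_pos rfl]
      omega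
    · have hA : k.castSucc ≠ i.castSucc := fun h => hki (Fin.castSucc_inj.mp h)
      have hD : k.succ ≠ i.succ := fun h => hki (Fin.succ_inj.mp h)
      rw [if_neg hA, if_neg hD]
      rcases eq_or_ne k.castSucc i.succ with hB | hB <;>
        rcases eq_or_ne k.succ i.castSucc with hC | hC
      · exfalso
        have h1 : (k.castSucc : Fin (s+1)).val = i.succ.val := by rw [hB]
        have h2 : (k.succ : Fin (s+1)).val = i.castSucc.val := by rw [hC]
        simp [Fin.val_succ] at h1 h2
        omega
      · rw [if_pos hB, if_neg hC]; omega
      · rw [if_neg hB, if_pos hC]; omega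
      · rw [if_neg hB, if_neg hC]; omega
  · intro i₁ i₂ h1 h2
    by_contra hne
    have key : ∀ a b : Fin s, a < b → v a.succ = v a.castSucc + 2 →
        v b.succ = v b.castSucc + 2 → False := by
      intro a b hab ha hb
      have hij : (a.castSucc : Fin (s+1)) < b.succ := by
        have : a.val < b.val + 1 := by omega
        simpa [Fin.lt_def] using this
      apply hfinal a.castSucc b.succ hij
      refine ⟨?_, hsum' _ _ hij.ne⟩
      rw [Fin.strictMono_iff_lt_succ]
      intro k

      have hk1 : v k.castSucc < v k.succ := hv (Fin.castSucc_lt_succ (i := k))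
      have hvab : a.val < b.val := hab
      rcases eq_or_ne k a with rfl | hka
      · have e1 : (k.castSucc : Fin (s+1)) ≠ b.succ := by
          simp [Fin.ext_iff]; omega
        have e2 : (k.succ : Fin (s+1)) ≠ k.castSucc := (Fin.castSucc_lt_succ (i := k)).ne'
        have e3 : (k.succ : Fin (s+1)) ≠ b.succ := fun h => by
          have := Fin.succ_inj.mp h; omega
        rw [if_pos rfl, if_neg e1, if_neg e2, if_neg e3]
        omega
      · rcases eq_or_ne k b with rfl | hkb
        · have e1 : (k.castSucc : Fin (s+1)) ≠ a.castSucc :=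
            fun h => hka (Fin.castSucc_inj.mp h)
          have e2 : (k.castSucc : Fin (s+1)) ≠ k.succ := (Fin.castSucc_lt_succ (i := k)).ne
          have e3 : (k.succ : Fin (s+1)) ≠ a.castSucc := by
            simp [Fin.ext_iff]; omega
          rw [if_neg e1, if_neg e2, if_neg e3, if_pos rfl]
          omega
        · have hA : k.castSucc ≠ a.castSucc := fun h => hka (Fin.castSucc_inj.mp h)
          have hD : k.succ ≠ b.succ := fun h => hkb (Fin.succ_inj.mp h)
          rw [if_neg hA, if_neg hD]
          rcases eq_or_ne k.castSucc b.succ with hB | hB <;>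
            rcases eq_or_ne k.succ a.castSucc with hC | hC
          · exfalso
            have e1 : (k.castSucc : Fin (s+1)).val = b.succ.val := by rw [hB]
            have e2 : (k.succ : Fin (s+1)).val = a.castSucc.val := by rw [hC]
            simp [Fin.val_succ] at e1 e2
            omega
          · rw [if_pos hB, if_neg hC]; omega
          · rw [if_neg hB, if_pos hC]; omega
          · rw [if_neg hB, if_neg hC]; omega
    rcases lt_trichotomy i₁ i₂ with h | h | h
    · exact key i₁ i₂ h h1 h2
    · exact hne h
    · exact key i₂ i₁ h h2 h1
end

section
/- For every α ∈ ℑ(s,n), one has wt(n, α) ≤ ϖ(s,n), where ϖ(s,n) := wt(n, ℘(s,n)). Moreover α ⪯ ℘(s,n) in lexicographic order. -/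
lemma wp_eq' (s n k : ℕ) : wp s n k =
    ⌊((n : ℚ) - wpSum s n k) / ((s : ℚ) + 1 - k) - ((s : ℚ) - k) / 2⌋ := by
  simp [wp, wpSum]

lemma wpSum_eq_sum (s n k : ℕ) : wpSum s n k = ∑ i ∈ Finset.range k, wp s n i := by
  have := Finset.sum_range_sub (wpSum s n) k
  simp only [wp]
  rw [this, show wpSum s n 0 = 0 from rfl, sub_zero]

lemma wpSum_top (s n : ℕ) : wpSum s n (s + 1) = n := by
  rw [wpSum]
  have h1 : (s : ℚ) + 1 - s = 1 := by ring
  have h2 : (s : ℚ) - s = 0 := by ring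
  rw [h1, h2, div_one, zero_div, sub_zero,
    show ((n:ℚ) - (wpSum s n s : ℤ)) = (((n : ℤ) - wpSum s n s : ℤ) : ℚ) by push_cast; ring,
    Int.floor_intCast]
  ring

lemma g_mono (s n k : ℕ) (hk : k ≤ s) {S T : ℤ} (hST : S ≤ T) :
    S + ⌊((n : ℚ) - S) / ((s : ℚ) + 1 - k) - ((s : ℚ) - k) / 2⌋ ≤
    T + ⌊((n : ℚ) - T) / ((s : ℚ) + 1 - k) - ((s : ℚ) - k) / 2⌋ := by
  have hm : (1:ℚ) ≤ (s:ℚ) + 1 - k := by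
    have : (k:ℚ) ≤ s := by exact_mod_cast hk
    linarith
  rw [← Int.floor_intCast_add, ← Int.floor_intCast_add]
  apply Int.floor_le_floor
  have hST' : (S:ℚ) ≤ T := by exact_mod_cast hST
  have hid : ((n:ℚ) - S) / ((s:ℚ) + 1 - k) =
      ((n:ℚ) - T) / ((s:ℚ) + 1 - k) + ((T:ℚ) - S) / ((s:ℚ) + 1 - k) := by
    rw [← add_div]; ring_nf
  have hds := div_le_self (sub_nonneg.2 hST') hm
  linarith [hds, hid.ge, hid.le]

lemma wp_lt (s n k : ℕ) (hk : k + 1 ≤ s) : wp s n k < wp s n (k + 1) := by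
  set m : ℚ := (s:ℚ) + 1 - k with hmdef
  have hm : (2:ℚ) ≤ m := by
    have : ((k:ℚ) + 1) ≤ s := by exact_mod_cast hk
    simp [hmdef]; linarith
  set R : ℤ := n - wpSum s n k with hR
  set q : ℤ := wp s n k with hq
  have hqval : q = ⌊(R:ℚ) / m - (m - 1) / 2⌋ := by
    rw [hq, wp_eq']
    congr 1
    rw [hmdef, hR]; push_cast; ring
  have hq1 : (q:ℚ) ≤ (R:ℚ) / m - (m - 1) / 2 := hqval ▸ Int.floor_le _
  have hS1 : wpSum s n (k+1) = wpSum s n k + q := by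
    rw [hq, wp]; ring
  rw [show wp s n (k+1) = ⌊((n : ℚ) - wpSum s n (k+1)) / ((s : ℚ) + 1 - (k+1:ℕ)) -
      ((s : ℚ) - (k+1:ℕ)) / 2⌋ from wp_eq' s n (k+1)]
  have hc1 : ((n:ℚ) - wpSum s n (k+1)) = (R:ℚ) - q := by rw [hS1, hR]; push_cast; ring
  have hc2 : ((s:ℚ) + 1 - (k+1:ℕ)) = m - 1 := by push_cast [hmdef]; ring
  have hc3 : ((s:ℚ) - (k+1:ℕ)) = m - 2 := by push_cast [hmdef]; ring
  rw [hc1, hc2, hc3]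
  have : q + 1 ≤ ⌊((R:ℚ) - q) / (m - 1) - (m - 2) / 2⌋ := by
    apply Int.le_floor.2
    push_cast
    rw [le_sub_iff_add_le, ← sub_nonneg]
    have hm1 : (0:ℚ) < m - 1 := by linarith
    have hm0 : (0:ℚ) < m := by linarith
    have h1 : ((q:ℚ) + (m-1)/2) * m ≤ R := by
      rw [← le_div_iff₀ hm0]; linarith
    have key : ((R:ℚ) - q) / (m - 1) - ((q:ℚ) + 1 + (m - 2) / 2) =
        ((R:ℚ) - q - ((q:ℚ) + 1 + (m - 2) / 2) * (m-1)) / (m - 1) := by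
      field_simp
    rw [key]
    apply div_nonneg _ hm1.le
    nlinarith [h1]
  omega

lemma ext_step (A : ℕ → ℤ) (hA : ∀ i, A i + 1 ≤ A (i + 1)) :
    ∀ k d : ℕ, A k + (d : ℤ) ≤ A (k + d) := by
  intro k d
  induction d with
  | zero => simp
  | succ d ih =>
    have := hA (k + d)
    rw [show k + (d + 1) = (k + d) + 1 from rfl]
    push_cast
    push_cast at ih
    omega

lemma sum_ge (A : ℕ → ℤ) (hA : ∀ i, A i + 1 ≤ A (i + 1)) (k t : ℕ) :
    2 * ((t : ℤ) * A k) + (t : ℤ) * ((t : ℤ) - 1) ≤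
      2 * ∑ i ∈ Finset.Ico k (k + t), A i := by
  induction t with
  | zero => simp
  | succ t ih =>
    rw [show k + (t+1) = (k + t) + 1 from rfl, Finset.sum_Ico_succ_top (by omega)]
    have h2 := ext_step A hA k t
    push_cast
    push_cast at ih
    nlinarith [ih, h2]

lemma keyA (s n : ℕ) (A : ℕ → ℤ) (hstepA : ∀ i, A i + 1 ≤ A (i + 1))
    (hsumA : ∑ i ∈ Finset.range (s + 1), A i = n)
    (k : ℕ) (hk : k ≤ s) :
    (A k : ℚ) ≤ ((n : ℚ) - (∑ i ∈ Finset.range k, A i : ℤ)) / ((s : ℚ) + 1 - k)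
      - ((s : ℚ) - k) / 2 := by
  set S : ℤ := ∑ i ∈ Finset.range k, A i with hS
  have hsplit : S + ∑ i ∈ Finset.Ico k (s + 1), A i = n := by
    rw [hS, Finset.range_eq_Ico, Finset.sum_Ico_consecutive _ (Nat.zero_le k) (by omega),
      ← Finset.range_eq_Ico, hsumA]
  have hge := sum_ge A hstepA k (s + 1 - k)
  rw [show k + (s + 1 - k) = s + 1 by omega] at hge
  set t : ℕ := s + 1 - k with ht
  have htq : (t : ℚ) = (s : ℚ) + 1 - k := by
    rw [ht]
    push_cast [Nat.cast_sub (by omega : k ≤ s + 1)]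
    ring
  have hm0 : (0 : ℚ) < (s : ℚ) + 1 - k := by
    rw [← htq]
    exact_mod_cast Nat.pos_of_ne_zero (by omega)
  have hq : 2 * ((t : ℚ) * (A k : ℚ)) + (t : ℚ) * ((t : ℚ) - 1) ≤ 2 * ((n : ℚ) - S) := by
    have h2 : (2 : ℤ) * ((t : ℤ) * A k) + (t : ℤ) * ((t : ℤ) - 1) ≤ 2 * ((n : ℤ) - S) := by
      omega
    exact_mod_cast h2
  rw [le_sub_iff_add_le, ← sub_nonneg,
    show ((s : ℚ) - k) = (t : ℚ) - 1 by linarith, ← htq]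
  have hm0' : (0 : ℚ) < (t : ℚ) := htq ▸ hm0
  have key : ((n : ℚ) - S) / (t : ℚ) - ((A k : ℚ) + ((t : ℚ) - 1) / 2) =
      (((n : ℚ) - S) - ((A k : ℚ) + ((t : ℚ) - 1) / 2) * (t : ℚ)) / (t : ℚ) := by
    field_simp
  rw [key]
  apply div_nonneg _ hm0'.le
  nlinarith [hq]

theorem wt_le_wpWeight (s n : ℕ) (hs : 1 ≤ s) (hn : 1 ≤ n)
    (a : Fin (s + 1) → ℤ) (ha : StrictMono a) (hsum : ∑ i, a i = n) :
    ((n : ℤ) ^ 2 - ∑ i, (a i) ^ 2) / 2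
        ≤ ((n : ℤ) ^ 2 - ∑ i : Fin (s + 1), (wp s n i) ^ 2) / 2 ∧
      toLex a ≤ toLex (fun i : Fin (s + 1) => wp s n i) := by
  classical
  set A : ℕ → ℤ := fun i => if h : i < s + 1 then a ⟨i, h⟩ else a (Fin.last s) + ((i : ℤ) - s)
    with hA
  have hAa : ∀ i : Fin (s + 1), A i.val = a i := by
    intro i
    simp only [hA, dif_pos i.isLt, Fin.eta]
  have hstepA : ∀ i, A i + 1 ≤ A (i + 1) := by
    intro i
    rcases lt_trichotomy (i + 1) (s + 1) with h | h | h
    · have hi : i < s + 1 := by omega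
      simp only [hA, dif_pos h, dif_pos hi]
      have := ha (show (⟨i, hi⟩ : Fin (s+1)) < ⟨i+1, h⟩ by simp [Fin.lt_def])
      omega
    · have hi : i < s + 1 := by omega
      have hi' : i = s := by omega
      simp only [hA, dif_pos hi, dif_neg (by omega : ¬ i + 1 < s + 1)]
      subst hi'
      have : (⟨i, hi⟩ : Fin (i+1)) = Fin.last i := by
        simp [Fin.last]
      rw [this]
      push_cast
      omega
    · simp only [hA, dif_neg (by omega : ¬ i + 1 < s + 1), dif_neg (by omega : ¬ i < s + 1)]
      push_cast
      omega
  have hsumA : ∑ i ∈ Finset.range (s + 1), A i = n := by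
    rw [← Fin.sum_univ_eq_sum_range A (s + 1), ← hsum]
    exact Finset.sum_congr rfl fun i _ => hAa i
  -- partial sums of A are dominated by wpSum
  have Sle : ∀ k, k ≤ s + 1 → (∑ i ∈ Finset.range k, A i) ≤ wpSum s n k := by
    intro k
    induction k with
    | zero => intro _; simp [wpSum]
    | succ k ih =>
      intro hk1
      have hk : k ≤ s := by omega
      have h2 : A k ≤ ⌊((n : ℚ) - (∑ i ∈ Finset.range k, A i : ℤ)) / ((s : ℚ) + 1 - k)
          - ((s : ℚ) - k) / 2⌋ :=
        Int.le_floor.2 (keyA s n A hstepA hsumA k hk)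
      calc ∑ i ∈ Finset.range (k+1), A i
          = (∑ i ∈ Finset.range k, A i) + A k := Finset.sum_range_succ A k
        _ ≤ (∑ i ∈ Finset.range k, A i) +
              ⌊((n : ℚ) - (∑ i ∈ Finset.range k, A i : ℤ)) / ((s : ℚ) + 1 - k)
                - ((s : ℚ) - k) / 2⌋ := by omega
        _ ≤ wpSum s n k +
              ⌊((n : ℚ) - wpSum s n k) / ((s : ℚ) + 1 - k) - ((s : ℚ) - k) / 2⌋ :=
            g_mono s n k hk (ih (by omega))
        _ = wpSum s n (k+1) := rfl
  -- lexicographic part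
  have hlex : toLex a ≤ toLex (fun i : Fin (s + 1) => wp s n i) := by
    by_cases heq : a = fun i : Fin (s + 1) => wp s n i
    · exact le_of_eq (congrArg toLex heq)
    · have hne : (Finset.univ.filter (fun i : Fin (s+1) => a i ≠ wp s n i)).Nonempty := by
        by_contra hc
        apply heq
        funext i
        by_contra hci
        exact hc ⟨i, Finset.mem_filter.2 ⟨Finset.mem_univ i, hci⟩⟩
      set i0 : Fin (s + 1) := (Finset.univ.filter (fun i : Fin (s+1) => a i ≠ wp s n i)).min' hne
        with hi0
      have hi0mem := (Finset.univ.filter (fun i : Fin (s+1) => a i ≠ wp s n i)).min'_mem hne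
      have hi0ne : a i0 ≠ wp s n i0 := (Finset.mem_filter.1 hi0mem).2
      have hprefix : ∀ j : Fin (s + 1), j < i0 → a j = wp s n j := by
        intro j hj
        by_contra hc
        exact absurd (Finset.min'_le _ j (Finset.mem_filter.2 ⟨Finset.mem_univ j, hc⟩))
          (not_le.2 hj)
      have hi0s : (i0 : ℕ) ≤ s := Nat.lt_succ_iff.mp i0.isLt
      have hSk : (∑ i ∈ Finset.range i0.val, A i) = wpSum s n i0.val := by
        rw [wpSum_eq_sum]
        apply Finset.sum_congr rfl
        intro j hj
        have hj' : j < i0.val := Finset.mem_range.1 hj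
        have hjlt : j < s + 1 := by omega
        have := hprefix ⟨j, hjlt⟩ (by simpa [Fin.lt_def] using hj')
        rw [show A j = a ⟨j, hjlt⟩ from hAa ⟨j, hjlt⟩, this]
      have hle : a i0 ≤ wp s n i0.val := by
        rw [← hAa i0]
        rw [wp_eq']
        apply Int.le_floor.2
        have := keyA s n A hstepA hsumA i0.val hi0s
        rwa [hSk] at this
      have hlt : a i0 < wp s n i0 := lt_of_le_of_ne hle hi0ne
      exact le_of_lt ⟨i0, fun j hj => hprefix j hj, hlt⟩
  refine ⟨?_, hlex⟩
  -- weight part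
  set P : ℕ → ℤ := wp s n with hP
  have hstepP : ∀ i, i < s → P i + 1 ≤ P (i + 1) := fun i hi => wp_lt s n i (by omega)
  have hsumP : ∑ i ∈ Finset.range (s + 1), P i = n := by
    rw [← wpSum_eq_sum, wpSum_top]
  have habel := Finset.sum_range_by_parts (fun i => A i + P i) (fun i => A i - P i) (s + 1)
  simp only [smul_eq_mul, Nat.add_sub_cancel] at habel
  have hG0 : ∑ i ∈ Finset.range (s + 1), (A i - P i) = 0 := by
    rw [Finset.sum_sub_distrib, hsumA, hsumP, sub_self]
  rw [hG0, mul_zero, zero_sub] at habel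
  have hterm : ∀ i ∈ Finset.range s,
      (A (i+1) + P (i+1) - (A i + P i)) * (∑ j ∈ Finset.range (i+1), (A j - P j)) ≤ 0 := by
    intro i hi
    have his : i < s := Finset.mem_range.1 hi
    have h1 : 2 ≤ A (i+1) + P (i+1) - (A i + P i) := by
      have := hstepA i
      have := hstepP i his
      omega
    have h2 : (∑ j ∈ Finset.range (i+1), (A j - P j)) ≤ 0 := by
      rw [Finset.sum_sub_distrib, ← wpSum_eq_sum]
      have := Sle (i+1) (by omega)
      omega
    exact mul_nonpos_of_nonneg_of_nonpos (by omega) h2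
  have hsum_le : ∑ i ∈ Finset.range s,
      (A (i+1) + P (i+1) - (A i + P i)) * (∑ j ∈ Finset.range (i+1), (A j - P j)) ≤ 0 :=
    Finset.sum_nonpos hterm
  have hmain : 0 ≤ ∑ i ∈ Finset.range (s + 1), (A i + P i) * (A i - P i) := by
    rw [habel]
    omega
  have hsq : ∑ i ∈ Finset.range (s + 1), (P i) ^ 2 ≤ ∑ i ∈ Finset.range (s + 1), (A i) ^ 2 := by
    have : ∑ i ∈ Finset.range (s + 1), (A i + P i) * (A i - P i) =
        ∑ i ∈ Finset.range (s + 1), ((A i) ^ 2 - (P i) ^ 2) := by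
      apply Finset.sum_congr rfl
      intro i _
      ring
    rw [this, Finset.sum_sub_distrib] at hmain
    omega
  have hfinA : ∑ i, (a i) ^ 2 = ∑ i ∈ Finset.range (s + 1), (A i) ^ 2 := by
    rw [← Fin.sum_univ_eq_sum_range (fun i => A i ^ 2) (s + 1)]
    exact Finset.sum_congr rfl fun i _ => by rw [hAa i]
  have hfinP : ∑ i : Fin (s + 1), (wp s n i) ^ 2 = ∑ i ∈ Finset.range (s + 1), (P i) ^ 2 :=
    Fin.sum_univ_eq_sum_range (fun i => P i ^ 2) (s + 1)
  rw [hfinA, hfinP]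
  apply Int.ediv_le_ediv (by norm_num)
  omega
end

section
/- Let s ≥ 2 and (s+1)(s+2) ≤ 2n, and let v(s,n) := (1, 2, …, s−1, n − s(s−1)/2 adjusted so that v has s entries: vᵢ = i for 1 ≤ i ≤ s−1 and v_s = n − s(s−1)/2). Then for every α ∈ P(s−1, n) (strictly increasing positive integer s-tuples summing to n), v(s,n) ⪯ α in lexicographic order and wt(n, v(s,n)) ≤ wt(n, α). -/
private lemma gauss_int (t : ℕ) :
    (2:ℤ) * (∑ i : Fin t, (((i:ℕ):ℤ) + 1)) = ((t:ℤ) + 1) * t := by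
  induction t with
  | zero => simp
  | succ k ih =>
    rw [Fin.sum_univ_castSucc]
    simp only [Fin.coe_castSucc, Fin.val_last]
    push_cast
    push_cast at ih
    linear_combination ih

theorem v_is_lex_min (s n : ℕ) (hs : 2 ≤ s) (h : (s + 1) * (s + 2) ≤ 2 * n)
    (v : Fin s → ℤ)
    (hv : v = fun i : Fin s => if (i : ℕ) < s - 1 then ((i : ℕ) : ℤ) + 1
      else (n : ℤ) - ((s : ℤ) * ((s : ℤ) - 1)) / 2) :
    ∀ a : Fin s → ℤ, StrictMono a → 1 ≤ a ⟨0, by omega⟩ → (∑ i, a i) = n →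
      toLex v ≤ toLex a ∧
      ((n : ℤ) ^ 2 - ∑ i, (v i) ^ 2) / 2 ≤ ((n : ℤ) ^ 2 - ∑ i, (a i) ^ 2) / 2 := by
  obtain ⟨t, rfl⟩ : ∃ t, s = t + 1 := ⟨s - 1, by omega⟩
  set w : Fin (t+1) → ℤ := fun i : Fin (t+1) => if (i : ℕ) < t + 1 - 1 then ((i : ℕ) : ℤ) + 1
      else (n : ℤ) - (((t+1:ℕ) : ℤ) * (((t+1:ℕ) : ℤ) - 1)) / 2 with hw
  subst hv
  intro a ha h0 hsum
  set M : ℤ := ∑ i : Fin t, (((i:ℕ):ℤ) + 1) with hMdef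
  have hM : 2 * M = ((t:ℤ) + 1) * t := gauss_int t
  have hdiv : ((t+1 : ℕ) : ℤ) * (((t+1:ℕ):ℤ) - 1) / 2 = M := by
    have h1 : ((t+1 : ℕ) : ℤ) * (((t+1:ℕ):ℤ) - 1) = 2 * M := by
      push_cast
      linear_combination -hM
    rw [h1]
    omega
  -- step A: a i ≥ i + 1
  have hstep : ∀ i : Fin (t+1), ((i:ℕ):ℤ) + 1 ≤ a i := by
    intro i
    induction i using Fin.induction with
    | zero => simpa using h0
    | succ j ih =>
      have h1 : a j.castSucc < a j.succ := ha (Fin.castSucc_lt_succ : j.castSucc < j.succ)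
      simp only [Fin.coe_castSucc] at ih
      simp only [Fin.val_succ]
      push_cast
      omega
  set L : Fin (t+1) := Fin.last t with hL
  have hvcs : ∀ i : Fin t, w i.castSucc = ((i:ℕ):ℤ) + 1 := by
    intro i
    simp only [hw, Fin.coe_castSucc]
    rw [if_pos (by omega)]
  have hvL : w L = (n:ℤ) - M := by
    simp only [hw, hL, Fin.val_last]
    rw [if_neg (by omega), hdiv]
  have hsum' : (∑ i : Fin t, a i.castSucc) + a L = (n:ℤ) := by
    rw [← Fin.sum_univ_castSucc]; exact hsum
  set D : ℤ := ∑ i : Fin t, (a i.castSucc - (((i:ℕ):ℤ) + 1)) with hDdef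
  have hD0 : 0 ≤ D := by
    apply Finset.sum_nonneg
    intro i _
    have := hstep i.castSucc
    simp only [Fin.coe_castSucc] at this
    omega
  have hsplit : (∑ i : Fin t, a i.castSucc) = M + D := by
    rw [hMdef, hDdef, ← Finset.sum_add_distrib]
    apply Finset.sum_congr rfl
    intro i _
    ring
  have haL : a L = (n:ℤ) - M - D := by omega
  have haLb : ∀ i : Fin t, a i.castSucc ≤ a L - 1 := by
    intro i
    have : a i.castSucc < a L := ha (Fin.castSucc_lt_last i)
    omega
  constructor
  · -- lex part
    rcases eq_or_ne w a with heq | hne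
    · exact le_of_eq (congrArg toLex heq)
    refine le_of_lt ?_
    rw [Function.ne_iff] at hne
    classical
    set S : Finset (Fin (t+1)) := Finset.univ.filter fun i => w i ≠ a i with hS
    have hSne : S.Nonempty := ⟨hne.choose, by simp [hS, hne.choose_spec]⟩
    set i := S.min' hSne with hi
    have hiS : i ∈ S := S.min'_mem hSne
    have hine : w i ≠ a i := by
      have := hiS
      simp [hS] at this
      exact this
    have hmin : ∀ j, j < i → w j = a j := by
      intro j hj
      by_contra hc
      have hjS : j ∈ S := by simp [hS, hc]
      exact absurd (S.min'_le j hjS) (not_le.mpr hj)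
    by_cases hit : (i:ℕ) < t
    · have hwi : w i = ((i:ℕ):ℤ) + 1 := by
        simp only [hw]
        rw [if_pos (by omega)]
      have h2 := hstep i
      have h3 : ((i:ℕ):ℤ) + 1 ≠ a i := hwi ▸ hine
      refine ⟨i, hmin, ?_⟩
      show w i < a i
      omega
    · have hiL : i = L := by
        apply Fin.ext; simp only [hL, Fin.val_last]; omega
      exfalso
      have hD : D = 0 := by
        rw [hDdef]
        apply Finset.sum_eq_zero
        intro j _
        have hjlt : j.castSucc < i := by
          rw [hiL]; exact Fin.castSucc_lt_last j
        have := hmin j.castSucc hjlt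
        rw [hvcs j] at this
        omega
      apply hine
      rw [hiL, hvL, haL, hD]
      ring
  · -- weight part
    apply Int.ediv_le_ediv (by norm_num)
    have hsq : (∑ i, (a i)^2) ≤ ∑ i, (w i)^2 := by
      rw [Fin.sum_univ_castSucc, Fin.sum_univ_castSucc (f := fun i => (w i)^2)]
      rw [hvL]
      have key : ∀ i ∈ Finset.univ, (a (Fin.castSucc i))^2 ≤
          ((((i : Fin t):ℕ):ℤ) + 1)^2 + (a i.castSucc - (((i:ℕ):ℤ) + 1)) * (2 * (a L - 1)) := by
        intro i _
        have h1 := hstep i.castSucc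
        simp only [Fin.coe_castSucc] at h1
        have h2 := haLb i
        nlinarith [h1, h2]
      have hsum2 := Finset.sum_le_sum key
      have hre : ∑ i : Fin t, (((((i : Fin t):ℕ):ℤ) + 1)^2
            + (a i.castSucc - (((i:ℕ):ℤ) + 1)) * (2 * (a L - 1)))
          = (∑ i : Fin t, ((((i : Fin t):ℕ):ℤ) + 1)^2) + D * (2 * (a L - 1)) := by
        rw [Finset.sum_add_distrib, hDdef, Finset.sum_mul]
      rw [hre] at hsum2
      have hcong : ∑ i : Fin t, (w i.castSucc)^2
          = ∑ i : Fin t, ((((i : Fin t):ℕ):ℤ) + 1)^2 := by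
        apply Finset.sum_congr rfl
        intro i _
        rw [hvcs i]
      rw [hcong]
      nlinarith [hD0, haL, hsum2]
    linarith
end

section
/- With the notation above, if the block sizes m₁ < m₂ < ⋯ < m_q are mutually distinct, then the group G = {σ ∈ S_N : σ preserves the set of inter-block pairs} equals the direct product G₁ × G₂ × ⋯ × G_q, where G_r is the subgroup of permutations of {1,…,N} fixing every element outside A_r. -/
theorem G_eq_product_of_block_groups (N q : ℕ) (B : Fin N → Fin q)
    (hB : Function.Surjective B)
    (hsizes : ∀ r s : Fin q, r ≠ s →
      (Finset.univ.filter fun i => B i = r).card ≠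
        (Finset.univ.filter fun i => B i = s).card) :
    ∀ σ : Equiv.Perm (Fin N),
      (∀ i j : Fin N, B i ≠ B j → B (σ i) ≠ B (σ j)) ↔ (∀ i : Fin N, B (σ i) = B i) := by
  intro σ
  constructor
  · intro h
    have h' : ∀ i j, B (σ i) = B (σ j) → B i = B j := by
      intro i j hij
      by_contra hne
      exact h i j hne hij
    choose x hx using hB
    set f : Fin q → Fin q := fun s => B (σ.symm (x s)) with hf
    have key : ∀ i, B i = f (B (σ i)) := by
      intro i
      apply h'
      rw [Equiv.apply_symm_apply, hx]
    have fsurj : Function.Surjective f := by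
      intro r
      refine ⟨B (σ (x r)), ?_⟩
      rw [← key (x r), hx]
    have fbij : Function.Bijective f :=
      Finite.surjective_iff_bijective.mp fsurj
    set m : Fin q → ℕ := fun r => (Finset.univ.filter fun i => B i = r).card with hm
    have hcard : ∀ s, (Finset.univ.filter fun i => B (σ i) = s).card = m s := by
      intro s
      apply Finset.card_bij' (fun i _ => σ i) (fun j _ => σ.symm j)
      · intro i hi
        simp only [Finset.mem_filter, Finset.mem_univ, true_and] at hi ⊢
        exact hi
      · intro j hj
        simp only [Finset.mem_filter, Finset.mem_univ, true_and] at hj ⊢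
        rwa [Equiv.apply_symm_apply]
      · intro i _; exact σ.symm_apply_apply i
      · intro j _; exact σ.apply_symm_apply j
    have hle : ∀ s, m s ≤ m (f s) := by
      intro s
      rw [← hcard s, hm]
      apply Finset.card_le_card
      intro i hi
      simp only [Finset.mem_filter, Finset.mem_univ, true_and] at hi ⊢
      rw [key i, hi]
    have hsum : ∑ s, m s = ∑ s, m (f s) := by
      exact (Fintype.sum_bijective f fbij _ _ (fun s => rfl)).symm
    have heq : ∀ s ∈ Finset.univ, m s = m (f s) :=
      (Finset.sum_eq_sum_iff_of_le (fun s _ => hle s)).mp hsum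
    have hfid : ∀ s, f s = s := by
      intro s
      by_contra hne
      exact hsizes s (f s) (fun e => hne e.symm) (heq s (Finset.mem_univ s))
    intro i
    rw [key i, hfid]
  · intro h i j hne
    rw [h i, h j]
    exact hne
end

section
/- Let s ≥ 2, (s+1)(s+2) ≤ 2n, and ℘(s,n) = (p₁, …, p_{s+1}), ℘(s−1,n) = (q₁, …, q_s). Write p₁ + e = bs + d with b, d nonnegative integers, 0 ≤ d ≤ s−1, where e is the remainder of n − s(s+1)/2 modulo s+1 as in the definition of ℘(s,n). Then q₁ = p₁ + b + 1 > p₁ and ϖ(s,n) − ϖ(s−1,n) = p₁(s+1−e) + bd(s+1) + (1/2)b(b−1)s(s+1) ≥ 2p₁. -/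
/-- `ϖ(s,n) = wt(n, ℘(s,n))`. -/
def wpWeight (s n : ℕ) : ℤ :=
  ((n : ℤ) ^ 2 - ∑ j ∈ Finset.range (s + 1), (wp s n j) ^ 2) / 2

private lemma sum_sq' (t : ℤ) : ∀ m : ℕ,
    6 * ∑ j ∈ Finset.range m, (t + (j:ℤ))^2
      = 6*m*t^2 + 6*t*(m:ℤ)*((m:ℤ)-1) + (m:ℤ)*((m:ℤ)-1)*(2*(m:ℤ)-1)
  | 0 => by simp
  | m+1 => by
      rw [Finset.sum_range_succ, mul_add, sum_sq' t m]
      push_cast; ring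

private lemma sum_ind' (t : ℤ) (k : ℕ) : ∀ m : ℕ, k ≤ m →
    ∑ j ∈ Finset.range m, (if k ≤ j then 2*(t+(j:ℤ))+1 else 0)
      = ((m:ℤ)-(k:ℤ))*(2*t+1) + ((m:ℤ)-(k:ℤ))*((m:ℤ)+(k:ℤ)-1) := by
  intro m
  induction m with
  | zero => intro h; interval_cases k; simp
  | succ m ih =>
    intro h
    rcases Nat.lt_or_ge m k with hm | hm
    · have hkm : k = m + 1 := by omega
      subst hkm
      rw [Finset.sum_eq_zero (fun j hj => by
        rw [if_neg]; exact fun hc => by simp at hj; omega)]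
      ring
    · rw [Finset.sum_range_succ, ih hm, if_pos hm]
      push_cast; ring

private lemma sum_sq_ind (t : ℤ) (k m : ℕ) (hk : k ≤ m) :
    6 * ∑ j ∈ Finset.range m, (t + (j:ℤ) + (if k ≤ j then 1 else 0))^2
      = 6*m*t^2 + 6*t*(m:ℤ)*((m:ℤ)-1) + (m:ℤ)*((m:ℤ)-1)*(2*(m:ℤ)-1)
        + 6*(((m:ℤ)-(k:ℤ))*(2*t+1) + ((m:ℤ)-(k:ℤ))*((m:ℤ)+(k:ℤ)-1)) := by
  have h1 : ∀ j ∈ Finset.range m, (t + (j:ℤ) + (if k ≤ j then 1 else 0))^2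
      = (t + (j:ℤ))^2 + (if k ≤ j then 2*(t+(j:ℤ))+1 else 0) := by
    intro j _; split <;> ring
  rw [Finset.sum_congr rfl h1, Finset.sum_add_distrib, mul_add, sum_sq' t m,
    sum_ind' t k m hk]

private lemma even_sum_range (f : ℕ → ℤ) (h : ∀ j, Even (f j)) :
    ∀ m : ℕ, Even (∑ j ∈ Finset.range m, f j)
  | 0 => by simp
  | m+1 => by
      rw [Finset.sum_range_succ]
      exact (even_sum_range f h m).add (h m)

private lemma wpSum_closed (s' : ℕ) (t : ℤ) (e : ℕ) (he : e ≤ s') (n : ℕ)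
    (hn : 2*(n:ℤ) = 2*t*((s':ℤ)+1) + 2*(e:ℤ) + (s':ℤ)*((s':ℤ)+1)) :
    ∀ j : ℕ, j ≤ s' + 1 →
      2 * wpSum s' n j = 2*(j:ℤ)*t + (j:ℤ)*((j:ℤ)-1)
        + 2 * max 0 ((j:ℤ) - ((s':ℤ)+1-(e:ℤ))) := by
  intro j
  induction j with
  | zero =>
    intro _
    rw [max_eq_left (by push_cast; omega)]
    simp [wpSum]
  | succ j ih =>
    intro hj
    have hj' : j ≤ s' := by omega
    have ihv := ih (by omega)
    have hjs : (j:ℤ) ≤ (s':ℤ) := by exact_mod_cast hj'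
    have hmQ : ((s':ℚ) + 1 - (j:ℚ)) ≠ 0 := by
      have : (j:ℚ) ≤ (s':ℚ) := by exact_mod_cast hj'
      linarith
    have hsum : wpSum s' n (j+1) = wpSum s' n j +
        ⌊((n : ℚ) - wpSum s' n j) / ((s' : ℚ) + 1 - j) - ((s' : ℚ) - j) / 2⌋ := rfl
    rcases le_or_gt ((s':ℤ)+1-(e:ℤ)) (j:ℤ) with hc | hc
    · -- incremented entries region: floor = t + j + 1
      rw [max_eq_right (by omega)] at ihv
      have hZ : 2*((n:ℤ) - wpSum s' n j)
          = (2*t + (s':ℤ) + (j:ℤ) + 2) * ((s':ℤ)+1-(j:ℤ)) := by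
        linear_combination hn - ihv
      have hQ : 2*((n:ℚ) - ((wpSum s' n j : ℤ) : ℚ))
          = (2*(t:ℚ) + (s':ℚ) + (j:ℚ) + 2) * ((s':ℚ)+1-(j:ℚ)) := by
        exact_mod_cast hZ
      have hx : ((n : ℚ) - wpSum s' n j) / ((s' : ℚ) + 1 - j) - ((s' : ℚ) - j) / 2
          = ((t + (j:ℤ) + 1 : ℤ) : ℚ) := by
        field_simp
        push_cast
        linear_combination hQ
      rw [hsum, hx, Int.floor_intCast,
        max_eq_right (show (0:ℤ) ≤ ((j:ℕ)+1:ℕ) - ((s':ℤ)+1-(e:ℤ)) by push_cast; omega)]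
      push_cast
      linarith [ihv]
    · -- floor = t + j
      rw [max_eq_left (by omega)] at ihv
      have hZ : 2*((n:ℤ) - wpSum s' n j)
          = (2*t + (s':ℤ) + (j:ℤ)) * ((s':ℤ)+1-(j:ℤ)) + 2*(e:ℤ) := by
        linear_combination hn - ihv
      have hQ : 2*((n:ℚ) - ((wpSum s' n j : ℤ) : ℚ))
          = (2*(t:ℚ) + (s':ℚ) + (j:ℚ)) * ((s':ℚ)+1-(j:ℚ)) + 2*(e:ℚ) := by
        exact_mod_cast hZ
      have hx : ((n : ℚ) - wpSum s' n j) / ((s' : ℚ) + 1 - j) - ((s' : ℚ) - j) / 2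
          = ((t + (j:ℤ) : ℤ) : ℚ) + (e:ℚ) / ((s':ℚ)+1-(j:ℚ)) := by
        field_simp
        push_cast
        linear_combination hQ
      have hfl : ⌊((n : ℚ) - wpSum s' n j) / ((s' : ℚ) + 1 - j) - ((s' : ℚ) - j) / 2⌋
          = t + (j:ℤ) := by
        rw [hx]
        have hmpos : (0:ℚ) < (s':ℚ)+1-(j:ℚ) := by
          have : (j:ℚ) ≤ (s':ℚ) := by exact_mod_cast hj'
          linarith
        have hlt : (e:ℚ) < (s':ℚ)+1-(j:ℚ) := by
          have : (e:ℤ) < (s':ℤ)+1-(j:ℤ) := by omega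
          exact_mod_cast this
        rw [Int.floor_intCast_add]
        have h0 : ⌊(e:ℚ) / ((s':ℚ)+1-(j:ℚ))⌋ = 0 := by
          rw [Int.floor_eq_zero_iff]
          constructor
          · exact div_nonneg (by positivity) hmpos.le
          · exact (div_lt_one hmpos).mpr hlt
        rw [h0, add_zero]
      rw [hsum, hfl,
        max_eq_left (show ((j:ℕ)+1:ℕ) - ((s':ℤ)+1-(e:ℤ)) ≤ 0 by push_cast; omega)]
      push_cast
      linarith [ihv]


private lemma wp_closed (s' : ℕ) (t : ℤ) (e : ℕ) (he : e ≤ s') (n : ℕ)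
    (hn : 2*(n:ℤ) = 2*t*((s':ℤ)+1) + 2*(e:ℤ) + (s':ℤ)*((s':ℤ)+1)) :
    ∀ j : ℕ, j ≤ s' →
      wp s' n j = t + (j:ℤ) + (if s'+1-e ≤ j then 1 else 0) := by
  intro j hj
  have h1 := wpSum_closed s' t e he n hn (j+1) (by omega)
  have h0 := wpSum_closed s' t e he n hn j (by omega)
  rw [wp]
  by_cases hc : s'+1-e ≤ j
  · rw [max_eq_right (show (0:ℤ) ≤ ((j+1:ℕ):ℤ) - ((s':ℤ)+1-(e:ℤ)) by push_cast; omega)] at h1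
    rw [max_eq_right (show (0:ℤ) ≤ ((j:ℕ):ℤ) - ((s':ℤ)+1-(e:ℤ)) by push_cast; omega)] at h0
    rw [if_pos hc]
    push_cast at h0 h1 ⊢
    linarith
  · rw [max_eq_left (show ((j+1:ℕ):ℤ) - ((s':ℤ)+1-(e:ℤ)) ≤ 0 by push_cast; omega)] at h1
    rw [max_eq_left (show ((j:ℕ):ℤ) - ((s':ℤ)+1-(e:ℤ)) ≤ 0 by push_cast; omega)] at h0
    rw [if_neg hc]
    push_cast at h0 h1 ⊢
    linarith


set_option maxHeartbeats 1000000 in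
theorem wpWeight_diff (s n : ℕ) (hs : 2 ≤ s) (hn : (s + 1) * (s + 2) ≤ 2 * n)
    (e : ℕ) (he : e ≤ s)
    (heq : (n : ℤ) - (s * (s + 1)) / 2
      = ⌊(n : ℚ) / ((s : ℚ) + 1) - (s : ℚ) / 2⌋ * ((s : ℤ) + 1) + e)
    (b d : ℕ) (hd : d ≤ s - 1)
    (hbd : wp s n 0 + (e : ℤ) = b * s + d) :
    wp (s - 1) n 0 = wp s n 0 + b + 1 ∧
    wp s n 0 < wp (s - 1) n 0 ∧
    wpWeight s n - wpWeight (s - 1) n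
      = wp s n 0 * ((s : ℤ) + 1 - e) + (b : ℤ) * d * ((s : ℤ) + 1)
        + ((b : ℤ) * ((b : ℤ) - 1) * s * ((s : ℤ) + 1)) / 2 ∧
    2 * wp s n 0 ≤ wpWeight s n - wpWeight (s - 1) n := by
  set t : ℤ := wp s n 0 with htdef
  -- t equals the floor in heq
  have ht : t = ⌊(n : ℚ) / ((s : ℚ) + 1) - (s : ℚ) / 2⌋ := by
    simp [htdef, wp, wpSum]
  -- basic equation for n
  have hdvd2 : (2:ℤ) ∣ (s:ℤ) * ((s:ℤ)+1) := (Int.even_mul_succ_self (s:ℤ)).two_dvd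
  have h2 : 2 * ((s:ℤ) * ((s:ℤ)+1) / 2) = (s:ℤ) * ((s:ℤ)+1) := Int.mul_ediv_cancel' hdvd2
  have hn0 : 2*(n:ℤ) = 2*t*((s:ℤ)+1) + 2*(e:ℤ) + (s:ℤ)*((s:ℤ)+1) := by
    rw [ht]; linarith [heq, h2]
  -- equation for the (s-1) case
  have hs1 : ((s-1:ℕ):ℤ) = (s:ℤ) - 1 := by omega
  have hd' : d ≤ (s-1) := hd
  have hn1 : 2*(n:ℤ) = 2*(t+(b:ℤ)+1)*(((s-1:ℕ):ℤ)+1) + 2*(d:ℤ)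
      + ((s-1:ℕ):ℤ)*(((s-1:ℕ):ℤ)+1) := by
    rw [hs1]; linear_combination hn0 + 2*hbd
  -- first entry of ℘(s-1, n)
  have hq : wp (s-1) n 0 = t + (b:ℤ) + 1 := by
    have := wp_closed (s-1) (t+(b:ℤ)+1) d hd' n hn1 0 (by omega)
    rw [if_neg (by omega)] at this
    simpa using this
  -- closed forms for the sums of squares
  set A : ℤ := ∑ j ∈ Finset.range (s+1), (wp s n j)^2 with hAdef
  set A1 : ℤ := ∑ j ∈ Finset.range (s-1+1), (wp (s-1) n j)^2 with hA1def
  have hAe : A = ∑ j ∈ Finset.range (s+1), (t + (j:ℤ) + (if s+1-e ≤ j then 1 else 0))^2 :=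
    Finset.sum_congr rfl (fun j hj => by
      rw [wp_closed s t e he n hn0 j (by simp only [Finset.mem_range] at hj; omega)])
  have hAs := sum_sq_ind t (s+1-e) (s+1) (by omega)
  rw [← hAe] at hAs
  push_cast [show ((s+1-e:ℕ):ℤ) = (s:ℤ)+1-(e:ℤ) from by omega] at hAs
  have hA1e : A1 = ∑ j ∈ Finset.range (s-1+1),
      ((t+(b:ℤ)+1) + (j:ℤ) + (if s-1+1-d ≤ j then 1 else 0))^2 :=
    Finset.sum_congr rfl (fun j hj => by
      rw [wp_closed (s-1) (t+(b:ℤ)+1) d hd' n hn1 j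
        (by simp only [Finset.mem_range] at hj; omega)])
  have hAs1 := sum_sq_ind (t+(b:ℤ)+1) (s-1+1-d) (s-1+1) (by omega)
  rw [← hA1e] at hAs1
  push_cast [show ((s-1+1-d:ℕ):ℤ) = (s:ℤ)-(d:ℤ) from by omega,
    show ((s-1+1:ℕ):ℤ) = (s:ℤ) from by omega,
    show ((s-1:ℕ):ℤ) = (s:ℤ)-1 from by omega] at hAs1
  -- the partial sums telescope to n
  have htel : ∑ j ∈ Finset.range (s+1), wp s n j = wpSum s n (s+1) := by
    simp only [wp]; rw [Finset.sum_range_sub (wpSum s n)]; simp [wpSum]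
  have hSn : wpSum s n (s+1) = (n:ℤ) := by
    have h := wpSum_closed s t e he n hn0 (s+1) (le_refl _)
    rw [max_eq_right (by push_cast; omega)] at h
    push_cast [show ((s+1-e:ℕ):ℤ) = (s:ℤ)+1-(e:ℤ) from by omega] at h
    linarith [h, hn0]
  have htel1 : ∑ j ∈ Finset.range (s-1+1), wp (s-1) n j = wpSum (s-1) n (s-1+1) := by
    simp only [wp]; rw [Finset.sum_range_sub (wpSum (s-1) n)]; simp [wpSum]
  have hSn1 : wpSum (s-1) n (s-1+1) = (n:ℤ) := by
    have h := wpSum_closed (s-1) (t+(b:ℤ)+1) d hd' n hn1 (s-1+1) (le_refl _)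
    rw [max_eq_right (by push_cast; omega)] at h
    push_cast [show ((s-1+1-d:ℕ):ℤ) = (s:ℤ)-(d:ℤ) from by omega,
      show ((s-1+1:ℕ):ℤ) = (s:ℤ) from by omega,
      show ((s-1:ℕ):ℤ) = (s:ℤ)-1 from by omega] at h hn1
    linarith [h, hn1]
  -- parity
  have evsq : ∀ (x : ℤ), Even (x^2 - x) := fun x => by
    have h := Int.even_mul_succ_self (x-1)
    rwa [show (x-1)*((x-1)+1) = x^2 - x by ring] at h
  have hpar : Even ((n:ℤ)^2 - A) := by
    have h2 : Even (A - (n:ℤ)) := by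
      rw [hAdef, ← hSn, ← htel, ← Finset.sum_sub_distrib]
      exact even_sum_range _ (fun j => evsq (wp s n j)) (s+1)
    have h1 := evsq (n:ℤ)
    have := h1.sub h2
    rwa [show (n:ℤ)^2 - (n:ℤ) - (A - (n:ℤ)) = (n:ℤ)^2 - A by ring] at this
  have hpar1 : Even ((n:ℤ)^2 - A1) := by
    have h2 : Even (A1 - (n:ℤ)) := by
      rw [hA1def, ← hSn1, ← htel1, ← Finset.sum_sub_distrib]
      exact even_sum_range _ (fun j => evsq (wp (s-1) n j)) (s-1+1)
    have h1 := evsq (n:ℤ)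
    have := h1.sub h2
    rwa [show (n:ℤ)^2 - (n:ℤ) - (A1 - (n:ℤ)) = (n:ℤ)^2 - A1 by ring] at this
  -- weights
  have hWdef : wpWeight s n = ((n:ℤ)^2 - A)/2 := rfl
  have hW1def : wpWeight (s-1) n = ((n:ℤ)^2 - A1)/2 := rfl
  have hW : 2 * wpWeight s n = (n:ℤ)^2 - A := by
    rw [hWdef]; exact Int.mul_ediv_cancel' hpar.two_dvd
  have hW1 : 2 * wpWeight (s-1) n = (n:ℤ)^2 - A1 := by
    rw [hW1def]; exact Int.mul_ediv_cancel' hpar1.two_dvd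
  -- the main identity
  have h6 : 6*A1 - 6*A = 12*t*((s:ℤ)+1-(e:ℤ)) + 12*(b:ℤ)*(d:ℤ)*((s:ℤ)+1)
      + 6*(b:ℤ)*((b:ℤ)-1)*(s:ℤ)*((s:ℤ)+1) := by
    linear_combination hAs1 - hAs
      + (6*(d:ℤ)+6*(e:ℤ)-6*t-12*(s:ℤ)+6*(b:ℤ)*(s:ℤ)-12)*hbd
  have hbb : (0:ℤ) ≤ (b:ℤ)*((b:ℤ)-1) := by
    rcases Nat.eq_zero_or_pos b with h|h
    · simp [h]
    · have : (1:ℤ) ≤ (b:ℤ) := by exact_mod_cast h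
      have hb0 : (0:ℤ) ≤ (b:ℤ) := by linarith
      exact mul_nonneg hb0 (by linarith)
  have hc2 : 2 * ((b:ℤ)*((b:ℤ)-1)*(s:ℤ)*((s:ℤ)+1) / 2)
      = (b:ℤ)*((b:ℤ)-1)*(s:ℤ)*((s:ℤ)+1) := by
    apply Int.mul_ediv_cancel'
    obtain ⟨r, hr⟩ := Int.even_mul_succ_self ((b:ℤ)-1)
    exact ⟨r*(s:ℤ)*((s:ℤ)+1), by linear_combination ((s:ℤ)*((s:ℤ)+1))*hr⟩
  have hG3 : wpWeight s n - wpWeight (s-1) n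
      = t * ((s : ℤ) + 1 - e) + (b : ℤ) * d * ((s : ℤ) + 1)
        + ((b : ℤ) * ((b : ℤ) - 1) * s * ((s : ℤ) + 1)) / 2 := by
    linarith [hW, hW1, h6, hc2]
  -- t ≥ 1
  have hncast : ((s:ℤ)+1)*((s:ℤ)+2) ≤ 2*(n:ℤ) := by exact_mod_cast hn
  have hecast : (e:ℤ) ≤ (s:ℤ) := by exact_mod_cast he
  have hscast : (2:ℤ) ≤ (s:ℤ) := by exact_mod_cast hs
  have ht1 : (1:ℤ) ≤ t := by
    have hts : 1 ≤ t*((s:ℤ)+1) := by linarith [hn0, hncast, hecast]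
    by_contra hcon
    push_neg at hcon
    have : t*((s:ℤ)+1) ≤ 0 :=
      mul_nonpos_of_nonpos_of_nonneg (by linarith) (by linarith)
    linarith
  -- the inequality
  have hb0 : (0:ℤ) ≤ (b:ℤ) := Int.natCast_nonneg b
  have hd0 : (0:ℤ) ≤ (d:ℤ) := Int.natCast_nonneg d
  have hdcast : (d:ℤ) ≤ (s:ℤ) - 1 := by omega
  have hG4 : 2 * t ≤ wpWeight s n - wpWeight (s-1) n := by
    rw [hG3]
    rcases le_or_gt (e:ℤ) ((s:ℤ)-1) with hce | hce
    · have p1 : (0:ℤ) ≤ t*((s:ℤ)-1-(e:ℤ)) := mul_nonneg (by linarith) (by linarith)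
      have p2 : (0:ℤ) ≤ (b:ℤ)*(d:ℤ)*((s:ℤ)+1) :=
        mul_nonneg (mul_nonneg hb0 hd0) (by linarith)
      have p3 : (0:ℤ) ≤ (b:ℤ)*((b:ℤ)-1)*(s:ℤ)*((s:ℤ)+1) :=
        mul_nonneg (mul_nonneg hbb (by linarith)) (by linarith)
      linarith [p1, p2, p3, hc2]
    · have hes : (e:ℤ) = (s:ℤ) := by omega
      rcases Nat.eq_zero_or_pos b with hbz | hbz
      · exfalso
        rw [hbz] at hbd
        push_cast at hbd
        linarith [hbd, hes, ht1, hdcast]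
      · have hb1 : (1:ℤ) ≤ (b:ℤ) := by exact_mod_cast hbz
        have hbs3 : (3:ℤ) ≤ (b:ℤ)*((s:ℤ)+1) := by
          have h := mul_le_mul_of_nonneg_right hb1 (show (0:ℤ) ≤ (s:ℤ)+1 by linarith)
          linarith
        have q1 : (0:ℤ) ≤ (d:ℤ)*((b:ℤ)*((s:ℤ)+1) - 1) :=
          mul_nonneg hd0 (by linarith)
        have q2 : (0:ℤ) ≤ ((b:ℤ)-1)*(s:ℤ)*((b:ℤ)*((s:ℤ)+1) - 2) :=
          mul_nonneg (mul_nonneg (by linarith) (by linarith)) (by linarith)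
        have hte : t*(e:ℤ) = t*(s:ℤ) := by rw [hes]
        linarith [q1, q2, hc2, hbd, hte]
  exact ⟨hq, by rw [hq]; linarith [hb0], hG3, hG4⟩
end

section
/- For every α = (a₁, …, a_{s+1}) ∈ ℑ(s,n), ℘(s,n) is a modification of α; that is, there exists a finite sequence α = α₁, α₂, …, α_r = ℘(s,n) within ℑ(s,n) such that each α_{i} is an elementary modification (addition of some η(i,j)) of α_{i−1}. -/
/-- `b` is an elementary modification of `a` lying in `ℑ(s,n)`:
`b = a + η(i,j)` for some `i < j`, with `b` strictly increasing and summing to `n`. -/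
def ElemMod (s n : ℕ) (a b : Fin (s + 1) → ℤ) : Prop :=
  (∃ i j : Fin (s + 1), i < j ∧
      b = fun k => a k + (if k = i then 1 else 0) - (if k = j then 1 else 0)) ∧
    StrictMono b ∧ (∑ k, b k) = n

-- strict mono gap lemma
lemma smono_gap' {m : ℕ} (a : Fin m → ℤ) (ha : StrictMono a) :
    ∀ d : ℕ, ∀ k l : Fin m, (l : ℕ) = (k : ℕ) + d → a k + (d : ℤ) ≤ a l := by
  intro d
  induction d with
  | zero =>
    intro k l h
    have : k = l := Fin.ext (by omega)
    simp [this]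
  | succ d ih =>
    intro k l h
    have hkd : (k : ℕ) + d < m := by omega
    have h1 := ih k ⟨(k : ℕ) + d, hkd⟩ (by simp)
    have h2 : a ⟨(k : ℕ) + d, hkd⟩ < a l := ha (by rw [Fin.lt_def]; simp; omega)
    push_cast
    push_cast at h1
    omega

lemma smono_gap {m : ℕ} (a : Fin m → ℤ) (ha : StrictMono a)
    (k l : Fin m) (h : (k : ℕ) ≤ l) : a k + ((l : ℕ) - (k : ℕ) : ℤ) ≤ a l := by
  have := smono_gap' a ha ((l : ℕ) - (k : ℕ)) k l (by omega)
  push_cast at this ⊢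
  omega

lemma mod_strictMono {m : ℕ} (a : Fin m → ℤ) (ha : StrictMono a)
    (i j : Fin m) (hij : i < j)
    (h1 : a i + 3 ≤ a j)
    (h2 : ∀ l, i < l → l ≠ j → a i + 2 ≤ a l)
    (h3 : ∀ k, k < j → k ≠ i → a k + 2 ≤ a j) :
    StrictMono (fun k => a k + (if k = i then 1 else 0) - (if k = j then 1 else 0)) := by
  have hij' : i ≠ j := ne_of_lt hij
  intro k l hkl
  simp only
  rcases eq_or_ne k i with rfl | hki
  · rcases eq_or_ne l j with rfl | hlj
    · simp [hij', Ne.symm hij']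
      linarith
    · have hli : l ≠ k := ne_of_gt hkl
      have := h2 l hkl hlj
      simp [hij', hli, hlj]
      linarith
  · rcases eq_or_ne k j with rfl | hkj
    · have hli : l ≠ i := ne_of_gt (lt_trans hij hkl)
      have hlj : l ≠ k := ne_of_gt hkl
      have := ha hkl
      simp [hij'.symm, hli, hlj]
      linarith
    · rcases eq_or_ne l i with rfl | hli
      · have := ha hkl
        simp [hki, hkj, hij']
        linarith
      · rcases eq_or_ne l j with rfl | hlj
        · have := h3 k hkl hki
          simp [hki, hkj, hli]
          linarith
        · have := ha hkl
          simp [hki, hkj, hli, hlj]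
          linarith

lemma mod_sum {m : ℕ} (a : Fin m → ℤ) (i j : Fin m) (hij : i ≠ j) :
    ∑ k, (a k + (if k = i then 1 else 0) - (if k = j then 1 else 0)) = ∑ k, a k := by
  simp [Finset.sum_add_distrib, Finset.sum_sub_distrib, Finset.sum_ite_eq']

lemma mod_sq {m : ℕ} (a : Fin m → ℤ) (i j : Fin m) (hij : i ≠ j) :
    ∑ k, (a k + (if k = i then 1 else 0) - (if k = j then 1 else 0)) ^ 2
      = (∑ k, (a k) ^ 2) + 2 * a i - 2 * a j + 2 := by
  have hpt : ∀ k, (a k + (if k = i then 1 else 0) - (if k = j then 1 else 0)) ^ 2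
      = (a k) ^ 2 + ((if k = i then 2 * a k + 1 else 0) + (if k = j then -(2 * a k) + 1 else 0)) := by
    intro k
    by_cases h1 : k = i <;> by_cases h2 : k = j <;> simp_all <;> ring
  simp only [hpt]
  rw [Finset.sum_add_distrib, Finset.sum_add_distrib, Finset.sum_ite_eq', Finset.sum_ite_eq']
  simp
  ring

lemma mk_mod (s n : ℕ) (a : Fin (s + 1) → ℤ) (ha : StrictMono a) (hsum : ∑ i, a i = n)
    (i j : Fin (s + 1)) (hij : i < j) (h1 : a i + 3 ≤ a j)
    (h2 : ∀ l, i < l → l ≠ j → a i + 2 ≤ a l)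
    (h3 : ∀ k, k < j → k ≠ i → a k + 2 ≤ a j) :
    ∃ b, ElemMod s n a b ∧ (∑ k, (b k) ^ 2) + 2 ≤ ∑ k, (a k) ^ 2 := by
  refine ⟨_, ⟨⟨i, j, hij, rfl⟩, mod_strictMono a ha i j hij h1 h2 h3,
    by rw [mod_sum a i j hij.ne]; exact hsum⟩, ?_⟩
  rw [mod_sq a i j hij.ne]
  linarith

lemma key (s n : ℕ) (a : Fin (s + 1) → ℤ) (ha : StrictMono a) (hsum : ∑ i, a i = n) :
    (a = fun j : Fin (s + 1) => wp s n j) ∨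
    ∃ b, ElemMod s n a b ∧ (∑ k, (b k) ^ 2) + 2 ≤ ∑ k, (a k) ^ 2 := by
  by_cases h3 : ∃ t : Fin s, a t.castSucc + 3 ≤ a t.succ
  · right
    obtain ⟨t, ht⟩ := h3
    apply mk_mod s n a ha hsum t.castSucc t.succ (Fin.castSucc_lt_succ : t.castSucc < t.succ) ht
    · intro l hl hlj
      have hl' : (t : ℕ) < (l : ℕ) := hl
      have hlj' : (l : ℕ) ≠ (t : ℕ) + 1 := by
        intro h
        exact hlj (Fin.ext (by simp [h]))
      have h := smono_gap a ha t.castSucc l (by simp; omega)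
      simp only [Fin.coe_castSucc] at h
      omega
    · intro k hk hki
      have hk' : (k : ℕ) < (t : ℕ) + 1 := hk
      have hki' : (k : ℕ) ≠ (t : ℕ) := by
        intro h
        exact hki (Fin.ext (by simp [h]))
      have h := smono_gap a ha k t.succ (by simp; omega)
      simp only [Fin.val_succ] at h
      omega
  by_cases h22 : ∃ u v : Fin s, u < v ∧ a u.castSucc + 2 ≤ a u.succ ∧ a v.castSucc + 2 ≤ a v.succ
  · right
    obtain ⟨u, v, huv, hu, hv⟩ := h22
    have huv' : (u : ℕ) < (v : ℕ) := huv
    apply mk_mod s n a ha hsum u.castSucc v.succ (by rw [Fin.lt_def]; simp; omega)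
    · have h := smono_gap a ha u.succ v.castSucc (by simp; omega)
      simp only [Fin.coe_castSucc, Fin.val_succ] at h
      omega
    · intro l hl _
      have hl' : (u : ℕ) < (l : ℕ) := hl
      have h := smono_gap a ha u.succ l (by simp; omega)
      simp only [Fin.coe_castSucc, Fin.val_succ] at h
      omega
    · intro k hk _
      have hk' : (k : ℕ) < (v : ℕ) + 1 := hk
      have h := smono_gap a ha k v.castSucc (by simp; omega)
      simp only [Fin.coe_castSucc, Fin.val_succ] at h
      omega
  · left
    push_neg at h3 h22
    have hA' : ∀ k, min k s < s + 1 := fun k => Nat.lt_succ_of_le (min_le_right k s)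
    set A : ℕ → ℤ := fun k => a ⟨min k s, hA' k⟩ with hAdef
    have hAa : ∀ (k : ℕ) (hk : k < s + 1), A k = a ⟨k, hk⟩ := by
      intro k hk
      simp only [hAdef]
      exact congrArg a (Fin.ext (by simp; omega))
    have key_gap : ∀ (t : ℕ) (htl : t < s),
        A t = a (⟨t, htl⟩ : Fin s).castSucc ∧ A (t + 1) = a (⟨t, htl⟩ : Fin s).succ := by
      intro t htl
      constructor
      · rw [hAa t (by omega)]
        exact congrArg a (Fin.ext (by simp))
      · rw [hAa (t + 1) (by omega)]
        exact congrArg a (Fin.ext (by simp))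
    have hg1 : ∀ t, t < s → A t + 1 ≤ A (t + 1) := by
      intro t htl
      obtain ⟨e1, e2⟩ := key_gap t htl
      rw [e1, e2]
      have h := ha (Fin.castSucc_lt_succ : (⟨t, htl⟩ : Fin s).castSucc < (⟨t, htl⟩ : Fin s).succ)
      omega
    have hg2 : ∀ t, t < s → A (t + 1) ≤ A t + 2 := by
      intro t htl
      obtain ⟨e1, e2⟩ := key_gap t htl
      rw [e1, e2]
      have h := h3 ⟨t, htl⟩
      omega
    have hg22 : ∀ t u, t < u → u < s → A t + 2 ≤ A (t + 1) → A (u + 1) ≤ A u + 1 := by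
      intro t u htu hus h2t
      obtain ⟨e1, e2⟩ := key_gap t (lt_trans htu hus)
      obtain ⟨f1, f2⟩ := key_gap u hus
      rw [f1, f2]
      rw [e1, e2] at h2t
      have h := h22 ⟨t, lt_trans htu hus⟩ ⟨u, hus⟩ (Fin.mk_lt_mk.mpr htu) h2t
      omega
    have hlow : ∀ j k : ℕ, j ≤ k → k ≤ s → A j + ((k : ℤ) - j) ≤ A k := by
      intro j k hjk
      induction k, hjk using Nat.le_induction with
      | base => intro _; omega
      | succ k hk ih =>
        intro hks
        have h1 := ih (by omega)
        have h2 := hg1 k (by omega)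
        push_cast at h1 ⊢
        omega
    have hupp : ∀ j k : ℕ, j ≤ k → k ≤ s →
        A k ≤ A j + ((k : ℤ) - j) + 1 ∧
        (A j + ((k : ℤ) - j) + 1 ≤ A k → ∀ t, k ≤ t → t < s → A (t + 1) ≤ A t + 1) := by
      intro j k hjk
      induction k, hjk using Nat.le_induction with
      | base =>
        intro _
        constructor
        · omega
        · intro habs t ht hts
          exfalso
          omega
      | succ k hk ih =>
        intro hks
        obtain ⟨ub, flag⟩ := ih (by omega)
        have hg2k := hg2 k (by omega)
        by_cases hsat : A j + ((k : ℤ) - j) + 1 ≤ A k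
        · have hflag := flag hsat
          have hgk1 : A (k + 1) ≤ A k + 1 := hflag k le_rfl (by omega)
          constructor
          · push_cast at ub ⊢; omega
          · intro _ t ht hts
            exact hflag t (by omega) hts
        · constructor
          · push_cast at ub hsat ⊢; omega
          · intro hsat1 t ht hts
            have h2k : A k + 2 ≤ A (k + 1) := by push_cast at hsat1 hsat; omega
            exact hg22 k t (by omega) hts h2k
    have htot : ∑ d ∈ Finset.range (s + 1), A d = (n : ℤ) := by
      rw [← Fin.sum_univ_eq_sum_range A (s + 1), ← hsum]
      exact Finset.sum_congr rfl (fun i _ => by rw [hAa i.val i.isLt])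
    have hPS : ∀ j : ℕ, j ≤ s + 1 → wpSum s n j = ∑ d ∈ Finset.range j, A d := by
      intro j hj
      induction j with
      | zero => simp [wpSum]
      | succ j ih =>
        have hj' : j ≤ s := by omega
        have ihj := ih (by omega)
        show wpSum s n j + ⌊((n : ℚ) - wpSum s n j) / ((s : ℚ) + 1 - j) - ((s : ℚ) - j) / 2⌋
          = ∑ d ∈ Finset.range (j + 1), A d
        rw [Finset.sum_range_succ, ihj]
        congr 1
        obtain ⟨m, hm⟩ : ∃ m, s = j + m := ⟨s - j, by omega⟩
        subst hm
        have hsplit : (∑ d ∈ Finset.range j, A d) + (∑ d ∈ Finset.range (m + 1), A (j + d))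
            = (n : ℤ) := by
          have h1 : (∑ d ∈ Finset.range (m + 1), A (j + d)) = ∑ k ∈ Finset.Ico j (j + m + 1), A k := by
            have e : j + m + 1 - j = m + 1 := by omega
            rw [Finset.sum_Ico_eq_sum_range, e]
          rw [h1, Finset.range_eq_Ico, Finset.sum_Ico_consecutive A (Nat.zero_le j) (by omega),
            ← Finset.range_eq_Ico]
          exact htot
        have hgauss : (∑ d ∈ Finset.range (m + 1), (d : ℤ)) * 2 = ((m : ℤ) + 1) * m := by
          have h := Finset.sum_range_id_mul_two (m + 1)
          simp only [Nat.add_sub_cancel] at h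
          have h' : ((∑ i ∈ Finset.range (m + 1), i : ℕ) : ℤ) * 2 = ((m : ℤ) + 1) * m := by
            exact_mod_cast h
          rw [Nat.cast_sum] at h'
          exact h'
        have hTlow : ((m : ℤ) + 1) * A j + (∑ d ∈ Finset.range (m + 1), (d : ℤ))
            ≤ ∑ d ∈ Finset.range (m + 1), A (j + d) := by
          have h1 : ∀ d ∈ Finset.range (m + 1), A j + (d : ℤ) ≤ A (j + d) := by
            intro d hd
            rw [Finset.mem_range] at hd
            have h := hlow j (j + d) (by omega) (by omega)
            push_cast at h
            omega
          have h2 := Finset.sum_le_sum h1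
          have e3 : ∑ d ∈ Finset.range (m + 1), (A j + (d : ℤ))
              = ((m : ℤ) + 1) * A j + ∑ d ∈ Finset.range (m + 1), (d : ℤ) := by
            simp only [Finset.sum_add_distrib, Finset.sum_const, Finset.card_range, nsmul_eq_mul]
            push_cast
            ring
          linarith [h2, e3]
        have hTupp : (∑ d ∈ Finset.range (m + 1), A (j + d))
            ≤ ((m : ℤ) + 1) * A j + (∑ d ∈ Finset.range (m + 1), (d : ℤ)) + m := by
          have e1 : (∑ d ∈ Finset.range (m + 1), A (j + d))
              = (∑ d ∈ Finset.range m, A (j + (d + 1))) + A j := by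
            rw [Finset.sum_range_succ' (fun d => A (j + d)) m]
            norm_num
          have e2 : (∑ d ∈ Finset.range (m + 1), (d : ℤ))
              = (∑ d ∈ Finset.range m, (d : ℤ)) + m := by
            rw [Finset.sum_range_succ' (fun d => (d : ℤ)) m]
            push_cast
            rw [Finset.sum_add_distrib]
            simp [Finset.card_range]
          have h1 : ∀ d ∈ Finset.range m, A (j + (d + 1)) ≤ A j + ((d : ℤ) + 2) := by
            intro d hd
            rw [Finset.mem_range] at hd
            have h := (hupp j (j + (d + 1)) (by omega) (by omega)).1
            push_cast at h
            omega
          have h2 := Finset.sum_le_sum h1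
          have e3 : ∑ d ∈ Finset.range m, (A j + ((d : ℤ) + 2))
              = (m : ℤ) * A j + (∑ d ∈ Finset.range m, (d : ℤ)) + 2 * m := by
            simp only [Finset.sum_add_distrib, Finset.sum_const, Finset.card_range, nsmul_eq_mul]
            push_cast
            ring
          rw [e1, e2]
          linarith [h2, e3]
        have hq : ((n : ℚ) - ((∑ d ∈ Finset.range j, A d : ℤ) : ℚ))
            = ((∑ d ∈ Finset.range (m + 1), A (j + d) : ℤ) : ℚ) := by
          have h := hsplit
          have h' : ((∑ d ∈ Finset.range j, A d : ℤ) : ℚ)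
              + ((∑ d ∈ Finset.range (m + 1), A (j + d) : ℤ) : ℚ) = (n : ℚ) := by
            exact_mod_cast congrArg (fun z : ℤ => (z : ℚ)) h
          linarith
        rw [Int.floor_eq_iff]
        have hden1 : ((j + m : ℕ) : ℚ) + 1 - (j : ℚ) = (m : ℚ) + 1 := by push_cast; ring
        have hden2 : ((j + m : ℕ) : ℚ) - (j : ℚ) = (m : ℚ) := by push_cast; ring
        rw [hq, hden1, hden2]
        have hpos : (0 : ℚ) < (m : ℚ) + 1 := by positivity
        have hTlowQ : ((m : ℚ) + 1) * ((A j : ℤ) : ℚ)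
            + ((∑ d ∈ Finset.range (m + 1), (d : ℤ) : ℤ) : ℚ)
            ≤ ((∑ d ∈ Finset.range (m + 1), A (j + d) : ℤ) : ℚ) := by
          exact_mod_cast hTlow
        have hTuppQ : ((∑ d ∈ Finset.range (m + 1), A (j + d) : ℤ) : ℚ)
            ≤ ((m : ℚ) + 1) * ((A j : ℤ) : ℚ)
            + ((∑ d ∈ Finset.range (m + 1), (d : ℤ) : ℤ) : ℚ) + (m : ℚ) := by
          exact_mod_cast hTupp
        have hgaussQ : ((∑ d ∈ Finset.range (m + 1), (d : ℤ) : ℤ) : ℚ) * 2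
            = ((m : ℚ) + 1) * (m : ℚ) := by
          exact_mod_cast hgauss
        constructor
        · rw [le_sub_iff_add_le, le_div_iff₀ hpos]
          nlinarith [hTlowQ, hgaussQ]
        · rw [sub_lt_iff_lt_add, div_lt_iff₀ hpos]
          nlinarith [hTuppQ, hgaussQ]
    funext i
    have h1 := hPS ((i : ℕ) + 1) i.isLt
    have h2 := hPS (i : ℕ) (le_of_lt i.isLt)
    show a i = wp s n i
    rw [wp, h1, h2, Finset.sum_range_succ, add_sub_cancel_left, hAa (i : ℕ) i.isLt]

theorem wp_is_modification (s n : ℕ) (hs : 1 ≤ s) (hn : 1 ≤ n)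
    (a : Fin (s + 1) → ℤ) (ha : StrictMono a) (hsum : ∑ i, a i = n) :
    Relation.ReflTransGen (ElemMod s n) a (fun j : Fin (s + 1) => wp s n j) := by
  clear hs hn
  suffices H : ∀ m : ℕ, ∀ a : Fin (s + 1) → ℤ, StrictMono a → (∑ i, a i = (n : ℤ)) →
      (∑ i, (a i) ^ 2).toNat ≤ m →
      Relation.ReflTransGen (ElemMod s n) a (fun j : Fin (s + 1) => wp s n j) by
    exact H (∑ i, (a i) ^ 2).toNat a ha hsum le_rfl
  intro m
  induction m with
  | zero =>
    intro a ha hsum hm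
    rcases key s n a ha hsum with h | ⟨b, hb, hlt⟩
    · rw [h]
    · exfalso
      have h1 : (0 : ℤ) ≤ ∑ k, (b k) ^ 2 := Finset.sum_nonneg (fun k _ => sq_nonneg _)
      omega
  | succ m ih =>
    intro a ha hsum hm
    rcases key s n a ha hsum with h | ⟨b, hb, hlt⟩
    · rw [h]
    · refine Relation.ReflTransGen.head hb (ih b hb.2.1 hb.2.2 ?_)
      have h1 : (0 : ℤ) ≤ ∑ k, (b k) ^ 2 := Finset.sum_nonneg (fun k _ => sq_nonneg _)
      omega
end
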